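/- Let n be a finite type, Q : Matrix n n ℂ, and σ a permutation of n whose permutation matrix P_σ (over ℂ) satisfies P_σ * Q = Q * P_σ. Then spectralRadius ℂ (P_σ * Q) = spectralRadius ℂ Q; that is, twisting a quiver by an automorphism does not change the spectral radius of its adjacency matrix. -/

import Mathlib

open Matrix

/-- The permutation matrix of a permutation `σ`: `(P_σ) i j = 1` if `j = σ i`, else `0`. -/
def permMat {V : Type*} [DecidableEq V] (R : Type*) [Zero R] [One R]
    (σ : Equiv.Perm V) : Matrix V V R :=
  Matrix.of fun i j => if j = σ i then 1 else 0


lemma permMat_mul {V : Type*} [Fintype V] [DecidableEq V] (σ τ : Equiv.Perm V) :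
    permMat ℂ σ * permMat ℂ τ = permMat ℂ (τ * σ) := by
  ext i j
  rw [Matrix.mul_apply, Finset.sum_eq_single (σ i)] <;>
    simp_all [permMat, Equiv.Perm.mul_apply]
  all_goals exact if_congr Iff.rfl rfl rfl

lemma permMat_one {V : Type*} [Fintype V] [DecidableEq V] :
    permMat ℂ (1 : Equiv.Perm V) = 1 := by
  ext i j
  simp [permMat, Matrix.one_apply, eq_comm]

lemma permMat_pow {V : Type*} [Fintype V] [DecidableEq V] (σ : Equiv.Perm V) (k : ℕ) :
    permMat ℂ σ ^ k = permMat ℂ (σ ^ k) := by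
  induction k with
  | zero => simp [permMat_one]
  | succ k ih => rw [pow_succ, ih, permMat_mul, ← pow_succ']

lemma aux_le {A : Type*} [Ring A] [Algebra ℂ A]
    (P Q : A) (m : ℕ) (hm : 0 < m) (hP : P ^ m = 1) (hc : Commute P Q) :
    spectralRadius ℂ (P * Q) ≤ spectralRadius ℂ Q := by
  rw [spectralRadius]
  refine iSup₂_le fun μ hμ => ?_
  have h1 : μ ^ m ∈ spectrum ℂ ((P * Q) ^ m) :=
    spectrum.pow_image_subset (P * Q) m ⟨μ, hμ, rfl⟩
  have h2 : (P * Q) ^ m = Q ^ m := by rw [hc.mul_pow, hP, one_mul]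
  rw [h2, spectrum.map_pow_of_pos Q hm] at h1
  obtain ⟨ν, hν, hνm⟩ := h1
  have hnorm : ‖ν‖₊ = ‖μ‖₊ := by
    have := congrArg (‖·‖₊) hνm
    simp only [nnnorm_pow] at this
    exact (pow_left_inj₀ (by positivity) (by positivity) hm.ne').mp this
  calc (‖μ‖₊ : ENNReal) = ‖ν‖₊ := by rw [hnorm]
    _ ≤ spectralRadius ℂ Q := le_iSup₂ (f := fun k (_ : k ∈ spectrum ℂ Q) => (‖k‖₊ : ENNReal)) ν hν

/-- Twisting a quiver by an automorphism does not change the spectral radius of its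
adjacency matrix: if `P_σ` commutes with `Q`, then `ρ(P_σ * Q) = ρ(Q)`. -/
theorem spectralRadius_twist_eq
    {n : Type*} [Fintype n] [DecidableEq n]
    (Q : Matrix n n ℂ) (σ : Equiv.Perm n)
    (hcomm : permMat ℂ σ * Q = Q * permMat ℂ σ) :
    spectralRadius ℂ (permMat ℂ σ * Q) = spectralRadius ℂ Q := by
  set P := permMat ℂ σ with hPdef
  set m := orderOf σ with hm
  have hmpos : 0 < m := orderOf_pos σ
  have hPm : P ^ m = 1 := by rw [hPdef, permMat_pow, pow_orderOf_eq_one, permMat_one]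
  have hPinv : permMat ℂ σ⁻¹ * P = 1 := by
    rw [hPdef, permMat_mul, mul_inv_cancel, permMat_one]
  have hinvP : P * permMat ℂ σ⁻¹ = 1 := by
    rw [hPdef, permMat_mul, inv_mul_cancel, permMat_one]
  refine le_antisymm (aux_le P Q m hmpos hPm hcomm) ?_
  have hQ : Q = permMat ℂ σ⁻¹ * (P * Q) := by rw [← mul_assoc, hPinv, one_mul]
  have hc2 : Commute (permMat ℂ σ⁻¹) (P * Q) := by
    unfold Commute SemiconjBy
    rw [← mul_assoc, hPinv, one_mul, hcomm, mul_assoc, hinvP, mul_one]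
  have hm2 : permMat ℂ σ⁻¹ ^ m = 1 := by
    rw [permMat_pow, inv_pow, hm, pow_orderOf_eq_one, inv_one, permMat_one]
  calc spectralRadius ℂ Q = spectralRadius ℂ (permMat ℂ σ⁻¹ * (P * Q)) := by rw [← hQ]
    _ ≤ spectralRadius ℂ (P * Q) := aux_le _ _ m hmpos hm2 hc2
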